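/- Let O be a valuation ring and 𝔭 ⊆ O a prime ideal such that O is Henselian along 𝔭 (the pair (O, 𝔭) is a Henselian pair). Then the localization O_𝔭 is Henselian along its ideal 𝔭O_𝔭. -/

import Mathlib

open Polynomial

theorem ValuationRing.exists_mem_of_mem_maximalIdeal_localization
    (O : Type*) [CommRing O] [IsDomain O] [ValuationRing O]
    (𝔭 : Ideal O) [𝔭.IsPrime]
    (x : Localization.AtPrime 𝔭) (hx : x ∈ IsLocalRing.maximalIdeal (Localization.AtPrime 𝔭)) :
    ∃ p ∈ 𝔭, algebraMap O (Localization.AtPrime 𝔭) p = x := by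
  obtain ⟨⟨a, s⟩, rfl⟩ := IsLocalization.mk'_surjective 𝔭.primeCompl x
  have ha : a ∈ 𝔭 := (IsLocalization.AtPrime.mk'_mem_maximal_iff _ 𝔭 a s).mp hx
  obtain ⟨c, hc | hc⟩ := ValuationRing.cond (s : O) a
  · refine ⟨c, ?_, ?_⟩
    · rcases ‹𝔭.IsPrime›.mem_or_mem (show (s : O) * c ∈ 𝔭 from hc ▸ ha) with h | h
      · exact absurd h s.2
      · exact h
    · rw [IsLocalization.eq_mk'_iff_mul_eq, ← map_mul]
      rw [show c * (s : O) = a from by rw [mul_comm]; exact hc]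
  · exfalso
    exact s.2 (hc ▸ 𝔭.mul_mem_right c ha)

theorem henselian_localization_of_henselian_valuationRing
    (O : Type*) [CommRing O] [IsDomain O] [ValuationRing O]
    (𝔭 : Ideal O) [𝔭.IsPrime] [HenselianRing O 𝔭] :
    HenselianRing (Localization.AtPrime 𝔭)
      (𝔭.map (algebraMap O (Localization.AtPrime 𝔭))) := by
  rw [Localization.AtPrime.map_eq_maximalIdeal]
  set R := Localization.AtPrime 𝔭 with hR
  set φ := algebraMap O R with hφ
  set M := IsLocalRing.maximalIdeal R with hM
  have hB : ∀ x ∈ M, ∃ p ∈ 𝔭, φ p = x :=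
    ValuationRing.exists_mem_of_mem_maximalIdeal_localization O 𝔭
  constructor
  · exact IsLocalRing.maximalIdeal_le_jacobson ⊥
  intro f hf a₀ ha₀ hder
  -- the degree is positive
  have hd : 1 ≤ f.natDegree := by
    by_contra h
    have h0 : f.natDegree = 0 := by omega
    have : f = 1 := (Polynomial.Monic.natDegree_eq_zero hf).mp h0
    rw [this] at ha₀
    simp at ha₀
    exact (IsLocalRing.maximalIdeal.isMaximal R).ne_top ((Ideal.eq_top_iff_one M).mpr ha₀)
  obtain ⟨m, hm⟩ : ∃ m, f.natDegree = m + 1 := ⟨f.natDegree - 1, by omega⟩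
  -- the derivative at a₀ is a unit of R
  have hunit : IsUnit (f.derivative.eval a₀) := by
    by_contra h
    have hmem : f.derivative.eval a₀ ∈ M := by
      rw [hM, IsLocalRing.mem_maximalIdeal]
      exact h
    rw [← Ideal.Quotient.eq_zero_iff_mem] at hmem
    rw [hmem, isUnit_zero_iff] at hder
    haveI : Nontrivial (R ⧸ M) :=
      Ideal.Quotient.nontrivial_iff.mpr (IsLocalRing.maximalIdeal.isMaximal R).ne_top
    exact zero_ne_one hder
  obtain ⟨u, hu⟩ := hunit
  set ℓ : R[X] := C a₀ + C (↑u : R) * X with hℓ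
  set g : R[X] := C ((↑u⁻¹ : R) ^ 2) * f.comp ℓ with hg
  have hgeval : ∀ t : R, g.eval t = (↑u⁻¹ : R) ^ 2 * f.eval (a₀ + ↑u * t) := by
    intro t; simp [hg, hℓ, eval_comp]
  have hinvsq : ((↑u : R)) ^ 2 * ((↑u⁻¹ : R)) ^ 2 = 1 := by
    rw [← mul_pow, u.mul_inv, one_pow]
  have hgdeg : g.natDegree ≤ m + 1 := by
    refine le_trans (natDegree_C_mul_le _ _) (le_trans natDegree_comp_le ?_)
    have hℓdeg : ℓ.natDegree ≤ 1 := by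
      refine le_trans (natDegree_add_le _ _) ?_
      simp only [natDegree_C, max_le_iff]
      exact ⟨Nat.zero_le _, le_trans (natDegree_mul_le) (by simp)⟩
    calc f.natDegree * ℓ.natDegree ≤ f.natDegree * 1 := Nat.mul_le_mul_left _ hℓdeg
      _ = m + 1 := by omega
  have hc0 : g.coeff 0 = (↑u⁻¹ : R) ^ 2 * f.eval a₀ := by
    rw [coeff_zero_eq_eval_zero, hgeval]; simp
  have hc0mem : g.coeff 0 ∈ M := by
    rw [hc0]; exact Ideal.mul_mem_left _ _ ha₀
  have hc1 : g.coeff 1 = 1 := by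
    have h1 : (derivative g).eval 0 = (↑u⁻¹ : R) ^ 2 * ((↑u : R) * f.derivative.eval a₀) := by
      rw [hg, derivative_C_mul, derivative_comp]
      simp [hℓ, eval_comp]
    rw [← hu] at h1
    have h2 : (derivative g).eval 0 = 1 := by
      rw [h1]
      calc (↑u⁻¹ : R) ^ 2 * ((↑u : R) * (↑u : R)) = ((↑u:R))^2 * ((↑u⁻¹:R))^2 := by ring
        _ = 1 := hinvsq
    have h3 := coeff_derivative g 0
    rw [← coeff_zero_eq_eval_zero, h3] at h2
    simpa using h2
  obtain ⟨p0, hp0mem, hp0⟩ := hB _ hc0mem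
  have hPmem : φ p0 ∈ M := by rw [hp0]; exact hc0mem
  -- choose elements of 𝔭 mapping to the higher coefficients times powers of p0
  have hbex : ∀ k : ℕ, ∃ b ∈ 𝔭, φ b = g.coeff (k + 2) * (φ p0) ^ (k + 1) := by
    intro k
    apply hB
    have : g.coeff (k + 2) * (φ p0) ^ (k + 1) = (g.coeff (k + 2) * (φ p0) ^ k) * φ p0 := by
      rw [pow_succ]; ring
    rw [this]
    exact Ideal.mul_mem_left _ _ hPmem
  choose b hbmem hφb using hbex
  -- the auxiliary monic polynomial over O
  set Q : O[X] := X ^ m + ∑ k ∈ Finset.range m, C (b k) * X ^ (m - 1 - k) with hQ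
  set H : O[X] := X ^ (m + 1) + Q with hH
  have hHmonic : H.Monic := by
    apply monic_X_pow_add
    rw [hQ]
    refine lt_of_le_of_lt (degree_add_le _ _) ?_
    rw [max_lt_iff]
    constructor
    · rw [degree_X_pow]
      exact_mod_cast Nat.lt_succ_self m
    · refine lt_of_le_of_lt (degree_sum_le _ _) ?_
      rw [Finset.sup_lt_iff (by exact_mod_cast WithBot.bot_lt_coe (m + 1))]
      intro k hk
      refine lt_of_le_of_lt (degree_C_mul_X_pow_le _ _) ?_
      exact_mod_cast Nat.lt_succ_of_le (by omega)
  -- H mod 𝔭 is X^(m+1) + X^m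
  have hHmap : H.map (Ideal.Quotient.mk 𝔭) = X ^ (m + 1) + X ^ m := by
    have : ∀ k, Ideal.Quotient.mk 𝔭 (b k) = 0 := fun k =>
      Ideal.Quotient.eq_zero_iff_mem.mpr (hbmem k)
    simp [hH, hQ, Polynomial.map_sum, this]
  have hev : H.eval (-1) ∈ 𝔭 := by
    rw [← Ideal.Quotient.eq_zero_iff_mem]
    have e1 : Ideal.Quotient.mk 𝔭 (H.eval (-1)) = (H.map (Ideal.Quotient.mk 𝔭)).eval (-1) := by
      rw [eval_map, ← eval₂_at_apply]
      simp
    rw [e1, hHmap]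
    simp [pow_succ]
  have hder' : IsUnit (Ideal.Quotient.mk 𝔭 (H.derivative.eval (-1))) := by
    have e1 : Ideal.Quotient.mk 𝔭 (H.derivative.eval (-1))
        = (derivative (H.map (Ideal.Quotient.mk 𝔭))).eval (-1) := by
      rw [derivative_map, eval_map, ← eval₂_at_apply]
      simp
    rw [e1, hHmap]
    have : IsUnit ((-1 : O ⧸ 𝔭) ^ m) := (isUnit_one.neg).pow m
    rcases m with _ | l
    · simp
    · convert this using 1
      simp only [derivative_add, derivative_X_pow, Nat.add_sub_cancel]
      simp only [eval_add, eval_mul, eval_pow, eval_natCast, eval_X, eval_C]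
      push_cast
      rw [pow_succ]
      ring
  obtain ⟨z, hz, hz1⟩ := HenselianRing.is_henselian (I := 𝔭) H hHmonic (-1) hev hder'
  have hznot : z ∉ 𝔭 := by
    intro h
    have h1 : (1 : O) ∈ 𝔭 := by
      have := 𝔭.sub_mem hz1 h
      have e : z - (-1) - z = 1 := by ring
      rwa [e] at this
    exact ‹𝔭.IsPrime›.ne_top ((Ideal.eq_top_iff_one 𝔭).mpr h1)
  have hzu : IsUnit (φ z) := IsLocalization.map_units R (⟨z, hznot⟩ : 𝔭.primeCompl)
  obtain ⟨zu, hzuv⟩ := hzu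
  -- the image of the root equation in R
  have hHR : (φ z) ^ (m + 1) + ((φ z) ^ m
      + ∑ k ∈ Finset.range m, φ (b k) * (φ z) ^ (m - 1 - k)) = 0 := by
    have h0 : φ (H.eval z) = 0 := by rw [show H.eval z = 0 from hz, map_zero]
    have he : φ (H.eval z) = (φ z) ^ (m + 1) + ((φ z) ^ m
        + ∑ k ∈ Finset.range m, φ (b k) * (φ z) ^ (m - 1 - k)) := by
      simp [hH, hQ, eval_finset_sum, map_sum]
    rw [he] at h0
    exact h0
  set t₀ : R := φ p0 * (↑zu⁻¹ : R) with ht₀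
  have ht₀mem : t₀ ∈ M := Ideal.mul_mem_right _ _ hPmem
  -- inverse powers of z cancel against powers of z
  have hpow : ∀ i : ℕ, i ≤ m + 1 → ((↑zu⁻¹ : R)) ^ i * (φ z) ^ (m + 1) = (φ z) ^ (m + 1 - i) := by
    intro i hi
    have h2 : zu ^ i * zu ^ (m + 1 - i) = zu ^ (m + 1) := by rw [← pow_add]; congr 1; omega
    have h1 : zu⁻¹ ^ i * zu ^ (m + 1) = zu ^ (m + 1 - i) := by
      rw [← h2, inv_pow, inv_mul_cancel_left]
    calc ((↑zu⁻¹ : R)) ^ i * (φ z) ^ (m + 1) = ((zu⁻¹ ^ i * zu ^ (m + 1) : Rˣ) : R) := by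
          rw [Units.val_mul, Units.val_pow_eq_pow_val, Units.val_pow_eq_pow_val, hzuv]
      _ = ((zu ^ (m + 1 - i) : Rˣ) : R) := by rw [h1]
      _ = (φ z) ^ (m + 1 - i) := by rw [Units.val_pow_eq_pow_val, hzuv]
  -- key sum identity
  have hkey : g.eval t₀ * (φ z) ^ (m + 1) = φ p0 * ((φ z) ^ (m + 1) + ((φ z) ^ m
      + ∑ k ∈ Finset.range m, φ (b k) * (φ z) ^ (m - 1 - k))) := by
    rw [eval_eq_sum_range' (lt_of_le_of_lt hgdeg (Nat.lt_succ_self _)) t₀]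
    rw [Finset.sum_mul, Finset.sum_range_succ', Finset.sum_range_succ']
    have hterm : ∀ k ∈ Finset.range m, g.coeff (k + 1 + 1) * t₀ ^ (k + 1 + 1) * (φ z) ^ (m + 1)
        = φ p0 * (φ (b k) * (φ z) ^ (m - 1 - k)) := by
      intro k hk
      rw [Finset.mem_range] at hk
      simp only [show k + 1 + 1 = k + 2 from by omega]
      have h1 := hpow (k + 2) (by omega)
      have h2 : m + 1 - (k + 2) = m - 1 - k := by omega
      rw [hφb k]
      calc g.coeff (k + 2) * t₀ ^ (k + 2) * (φ z) ^ (m + 1)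
          = g.coeff (k + 2) * (φ p0) ^ (k + 2) * (((↑zu⁻¹ : R)) ^ (k + 2) * (φ z) ^ (m + 1)) := by
            rw [ht₀, mul_pow]; ring
        _ = g.coeff (k + 2) * (φ p0) ^ (k + 2) * (φ z) ^ (m - 1 - k) := by rw [h1, h2]
        _ = φ p0 * (g.coeff (k + 2) * φ p0 ^ (k + 1) * (φ z) ^ (m - 1 - k)) := by
            rw [pow_succ]; ring
    rw [Finset.sum_congr rfl hterm]
    have hf1 : g.coeff (0 + 1) * t₀ ^ (0 + 1) * (φ z) ^ (m + 1) = φ p0 * (φ z) ^ m := by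
      simp only [zero_add]
      have h1 := hpow 1 (by omega)
      rw [hc1, pow_one, ht₀]
      calc 1 * (φ p0 * (↑zu⁻¹ : R)) * (φ z) ^ (m + 1)
          = φ p0 * (((↑zu⁻¹ : R)) ^ 1 * (φ z) ^ (m + 1)) := by ring
        _ = φ p0 * (φ z) ^ (m + 1 - 1) := by rw [h1]
        _ = φ p0 * (φ z) ^ m := by norm_num
    have hf0 : g.coeff 0 * t₀ ^ 0 * (φ z) ^ (m + 1) = φ p0 * (φ z) ^ (m + 1) := by
      rw [pow_zero, ← hp0]; ring
    rw [hf1, hf0, mul_add, mul_add, Finset.mul_sum]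
    ring
  rw [hHR, mul_zero] at hkey
  have hroot : g.eval t₀ = 0 := by
    have hWu : IsUnit ((φ z) ^ (m + 1)) := (hzuv ▸ zu.isUnit).pow _
    obtain ⟨W, hW⟩ := hWu
    rw [← hW] at hkey
    exact (Units.mul_left_eq_zero W).mp hkey
  refine ⟨a₀ + ↑u * t₀, ?_, ?_⟩
  · have h0 := hroot
    rw [hgeval] at h0
    show f.eval (a₀ + ↑u * t₀) = 0
    linear_combination ((↑u : R)) ^ 2 * h0 - f.eval (a₀ + ↑u * t₀) * hinvsq
  · have e : a₀ + ↑u * t₀ - a₀ = ↑u * t₀ := by ring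
    rw [e]
    exact Ideal.mul_mem_left _ _ ht₀mem
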